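/- Let H be a finite simple graph with vertex set V(H), let L be a finite set with |L| = s, and let x and y be two distinct elements not in L. Consider the functions B : V(H) → L ∪ {x, y} such that (i) for each z ∈ L at most one vertex of H is mapped to z, and (ii) every connected component of the subgraph of H induced by the vertices not mapped into L is mapped constantly (all its vertices go to x, or all go to y). Then the number of such functions B is at most (|V(H)| + 1)^s · 2^{K_s(H)}, where K_s(H) denotes the maximum, over all sets X ⊆ V(H) with |X| ≤ s, of the number of connected components of the subgraph of H induced by V(H) ∖ X. -/

import Mathlib

open Classical

noncomputable def stmt5Emb {VH : Type} [Fintype VH] (H : SimpleGraph VH) (X : Set VH) (K : ℕ)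
    (h : Nat.card (H.induce Xᶜ).ConnectedComponent ≤ K) :
    (H.induce Xᶜ).ConnectedComponent ↪ Fin K :=
  letI := Fintype.ofFinite (H.induce Xᶜ).ConnectedComponent
  ((Fintype.equivFin _).toEmbedding.trans (Fin.castLEEmb (by
    rwa [← Nat.card_eq_fintype_card])))

noncomputable def stmt5G {VH W : Type} [Fintype VH] [DecidableEq W]
    (H : SimpleGraph VH) (K : ℕ) (X : Set VH) (B : VH → W) (x : W) : Fin K → Bool :=
  fun i =>
    if h : Nat.card (H.induce Xᶜ).ConnectedComponent ≤ K then
      if h2 : ∃ C, stmt5Emb H X K h C = i then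
        decide (B (h2.choose.out : ↥Xᶜ) = x)
      else false
    else false

theorem stmt5_recon {VH W : Type} [Fintype VH] [DecidableEq W]
    (H : SimpleGraph VH) (K : ℕ) (X : Set VH) (B : VH → W) (x y : W)
    (hK : Nat.card (H.induce Xᶜ).ConnectedComponent ≤ K)
    (hxy : x ≠ y)
    (hBxy : ∀ v : ↥Xᶜ, B v = x ∨ B v = y)
    (hconst : ∀ v₁ v₂ : ↥Xᶜ, (H.induce Xᶜ).Reachable v₁ v₂ → B v₁ = B v₂)
    (v : ↥Xᶜ) :
    B v = if stmt5G H K X B x (stmt5Emb H X K hK ((H.induce Xᶜ).connectedComponentMk v))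
      then x else y := by
  have h2 : ∃ C, stmt5Emb H X K hK C =
      stmt5Emb H X K hK ((H.induce Xᶜ).connectedComponentMk v) := ⟨_, rfl⟩
  have hC : h2.choose = (H.induce Xᶜ).connectedComponentMk v :=
    (stmt5Emb H X K hK).injective h2.choose_spec
  have hout : (H.induce Xᶜ).connectedComponentMk h2.choose.out = h2.choose :=
    h2.choose.out_eq
  have hreach : (H.induce Xᶜ).Reachable h2.choose.out v :=
    SimpleGraph.ConnectedComponent.exact (hout.trans hC)
  have hval : B (h2.choose.out : ↥Xᶜ) = B v := hconst _ _ hreach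
  rw [stmt5G, dif_pos hK, dif_pos h2, hval]
  rcases hBxy v with h | h
  · simp [h]
  · rw [h]
    simp [hxy.symm]

noncomputable def stmt5F {VH W : Type} [Fintype VH] [DecidableEq W]
    (H : SimpleGraph VH) (L : Finset W) (K : ℕ) (x : W) (B : VH → W) :
    (↥L → Option VH) × (Fin K → Bool) :=
  (fun z => if h : ∃ v, B v = z then some h.choose else none,
    stmt5G H K {v | B v ∈ L} B x)

theorem stmt5F_fst {VH W : Type} [Fintype VH] [DecidableEq W]
    (H : SimpleGraph VH) (L : Finset W) (K : ℕ) (x : W) (B : VH → W)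
    (hinj : ∀ z ∈ L, ∀ v₁ v₂ : VH, B v₁ = z → B v₂ = z → v₁ = v₂)
    (v : VH) (hv : B v ∈ L) :
    (stmt5F H L K x B).1 ⟨B v, hv⟩ = some v := by
  have h : ∃ v', B v' = B v := ⟨v, rfl⟩
  have := h.choose_spec
  simp only [stmt5F, dif_pos h]
  exact congrArg some (hinj (B v) hv _ _ this rfl)

theorem stmt5F_fst' {VH W : Type} [Fintype VH] [DecidableEq W]
    (H : SimpleGraph VH) (L : Finset W) (K : ℕ) (x : W) (B : VH → W)
    (z : ↥L) (v : VH) (h : (stmt5F H L K x B).1 z = some v) :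
    B v = z := by
  by_cases hex : ∃ v', B v' = z
  · simp only [stmt5F, dif_pos hex] at h
    rw [← Option.some_inj.mp h]
    exact hex.choose_spec
  · simp only [stmt5F, dif_neg hex] at h
    exact nomatch h

/-- Let `H` be a finite simple graph, `L` a finite set of size `s`, and `x ≠ y` two
elements not in `L`.  The number of functions `B : V(H) → L ∪ {x, y}` that are injective
on the preimage of `L` and constant on each connected component of the subgraph of `H`
induced by the vertices not mapped into `L` is at most
`(|V(H)| + 1)^s * 2^(K_s(H))`, where `K_s(H)` is the maximum number of connected
components of an induced subgraph of `H` obtained by deleting at most `s` vertices. -/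
theorem stmt_5 {VH W : Type} [Fintype VH] [Fintype W] [DecidableEq W]
    (H : SimpleGraph VH) (L : Finset W) (s : ℕ) (hs : L.card = s)
    (x y : W) (hxy : x ≠ y) (hx : x ∉ L) (hy : y ∉ L) :
    Set.ncard {B : VH → W |
      (∀ v : VH, B v ∈ (L : Set W) ∪ {x, y}) ∧
      (∀ z ∈ L, ∀ v₁ v₂ : VH, B v₁ = z → B v₂ = z → v₁ = v₂) ∧
      (∀ v₁ v₂ : ↥{v : VH | B v ∉ L},
        (H.induce {v : VH | B v ∉ L}).Reachable v₁ v₂ → B ↑v₁ = B ↑v₂)} ≤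
    (Fintype.card VH + 1) ^ s *
      2 ^ sSup {n : ℕ | ∃ X : Set VH, X.ncard ≤ s ∧
        n = Nat.card (H.induce Xᶜ).ConnectedComponent} := by
  set K := sSup {n : ℕ | ∃ X : Set VH, X.ncard ≤ s ∧
      n = Nat.card (H.induce Xᶜ).ConnectedComponent} with hKdef
  set S := {B : VH → W |
      (∀ v : VH, B v ∈ (L : Set W) ∪ {x, y}) ∧
      (∀ z ∈ L, ∀ v₁ v₂ : VH, B v₁ = z → B v₂ = z → v₁ = v₂) ∧
      (∀ v₁ v₂ : ↥{v : VH | B v ∉ L},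
        (H.induce {v : VH | B v ∉ L}).Reachable v₁ v₂ → B ↑v₁ = B ↑v₂)} with hSdef
  -- the sSup set is bounded above
  have hbdd : BddAbove {n : ℕ | ∃ X : Set VH, X.ncard ≤ s ∧
      n = Nat.card (H.induce Xᶜ).ConnectedComponent} := by
    refine ⟨Fintype.card VH, fun n hn => ?_⟩
    obtain ⟨X, _, rfl⟩ := hn
    calc Nat.card (H.induce Xᶜ).ConnectedComponent
        ≤ Nat.card ↥Xᶜ :=
          Nat.card_le_card_of_surjective _ (Quot.mk_surjective)
      _ ≤ Nat.card VH := Nat.card_le_card_of_injective _ Subtype.val_injective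
      _ = Fintype.card VH := Nat.card_eq_fintype_card
  -- bound on component count for B ∈ S
  have hKB : ∀ B ∈ S, Nat.card (H.induce ({v : VH | B v ∈ L} : Set VH)ᶜ).ConnectedComponent ≤ K := by
    intro B hB
    apply le_csSup hbdd
    refine ⟨{v : VH | B v ∈ L}, ?_, rfl⟩
    calc ({v : VH | B v ∈ L} : Set VH).ncard
        ≤ (L : Set W).ncard := by
          apply Set.ncard_le_ncard_of_injOn B (fun v hv => hv)
          · intro v₁ h₁ v₂ h₂ he
            exact hB.2.1 (B v₂) h₂ v₁ v₂ (he.trans rfl) rfl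
      _ = s := by rw [Set.ncard_coe_finset, hs]
  -- injectivity of stmt5F on S
  have hinjF : Set.InjOn (stmt5F H L K x) S := by
    intro B hB B' hB' hFeq
    have hf : (stmt5F H L K x B).1 = (stmt5F H L K x B').1 := congrArg Prod.fst hFeq
    have hg : (stmt5F H L K x B).2 = (stmt5F H L K x B').2 := congrArg Prod.snd hFeq
    -- membership transfer
    have hdir : ∀ v : VH, B v ∈ L → B' v = B v := by
      intro v hv
      have h1 : (stmt5F H L K x B).1 ⟨B v, hv⟩ = some v :=
        stmt5F_fst H L K x B hB.2.1 v hv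
      exact stmt5F_fst' H L K x B' ⟨B v, hv⟩ v (by rw [← hf, h1])
    have hdir' : ∀ v : VH, B' v ∈ L → B v = B' v := by
      intro v hv
      have h1 : (stmt5F H L K x B').1 ⟨B' v, hv⟩ = some v :=
        stmt5F_fst H L K x B' hB'.2.1 v hv
      exact stmt5F_fst' H L K x B ⟨B' v, hv⟩ v (by rw [hf, h1])
    have hXeq : {v : VH | B' v ∈ L} = {v : VH | B v ∈ L} := by
      ext v
      constructor
      · intro hv
        show B v ∈ L
        rw [hdir' v hv]; exact hv
      · intro hv
        show B' v ∈ L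
        rw [hdir v hv]; exact hv
    set X : Set VH := {v : VH | B v ∈ L} with hXdef
    have hK1 : Nat.card (H.induce Xᶜ).ConnectedComponent ≤ K := hKB B hB
    funext v
    by_cases hv : B v ∈ L
    · exact (hdir v hv).symm
    · -- v ∉ X
      have hv' : B' v ∉ L := fun h => hv ((hdir' v h) ▸ h)
      have hvX : v ∈ Xᶜ := hv
      -- x/y valued on Xᶜ
      have hBxy : ∀ w : ↥Xᶜ, B w = x ∨ B w = y := by
        intro w
        rcases hB.1 w with h | h
        · exact absurd h w.2
        · rcases h with h | h
          · exact Or.inl h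
          · exact Or.inr h
      have hBxy' : ∀ w : ↥Xᶜ, B' w = x ∨ B' w = y := by
        intro w
        have hw : B' (w : VH) ∉ L := by
          intro h
          exact w.2 (show B (w : VH) ∈ L by rw [hdir' _ h]; exact h)
        rcases hB'.1 w with h | h
        · exact absurd h hw
        · rcases h with h | h
          · exact Or.inl h
          · exact Or.inr h
      have hconst : ∀ w₁ w₂ : ↥Xᶜ, (H.induce Xᶜ).Reachable w₁ w₂ → B w₁ = B w₂ :=
        hB.2.2
      have hconst' : ∀ w₁ w₂ : ↥Xᶜ, (H.induce Xᶜ).Reachable w₁ w₂ → B' w₁ = B' w₂ := by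
        have e : ({v : VH | B' v ∉ L} : Set VH) = Xᶜ := by
          rw [← hXeq]; rfl
        have := hB'.2.2
        rw [e] at this
        exact this
      have r1 := stmt5_recon H K X B x y hK1 hxy hBxy hconst ⟨v, hvX⟩
      have r2 := stmt5_recon H K X B' x y hK1 hxy hBxy' hconst' ⟨v, hvX⟩
      have hgX : stmt5G H K X B x = stmt5G H K X B' x := by
        have : (stmt5F H L K x B').2 = stmt5G H K {v : VH | B' v ∈ L} B' x := rfl
        rw [this, hXeq] at hg
        exact hg
      rw [r1, r2, hgX]
  -- counting
  have hcard : Set.ncard S ≤ Nat.card ((↥L → Option VH) × (Fin K → Bool)) := by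
    rw [← Nat.card_coe_set_eq]
    exact Nat.card_le_card_of_injective _ (Set.injOn_iff_injective.mp hinjF)
  calc Set.ncard S ≤ Nat.card ((↥L → Option VH) × (Fin K → Bool)) := hcard
    _ = (Fintype.card VH + 1) ^ s * 2 ^ K := by
        simp [Nat.card_eq_fintype_card, Fintype.card_fun, hs]
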